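/- Let f, g be measurable real-valued functions on the circle S with ‖f‖_p < ∞ and ‖g‖_p < ∞ for some p ∈ [1, ∞]. Then ‖f* - g*‖_p ≤ ‖f - g‖_p, where f* and g* denote the symmetric non-increasing rearrangements. -/

import Mathlib

open MeasureTheory Set Filter
open scoped ENNReal NNReal

noncomputable section

/-- The circle of circumference `1`, parametrised by the interval `(-1/2, 1/2]`. -/
def circ : Set ℝ := Set.Ioc (-(1/2) : ℝ) (1/2)

/-- Lebesgue measure on the circle. -/
def μc : Measure ℝ := volume.restrict circ

/-- `f : ℝ → ℝ` is a symmetric non-increasing function on the circle. -/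
structure SymNonInc (f : ℝ → ℝ) : Prop where
  symm : ∀ x ∈ Set.Ioo (-(1/2) : ℝ) (1/2), f (-x) = f x
  anti : AntitoneOn f (Set.Ico (0 : ℝ) (1/2))
  leftCont0 : ContinuousWithinAt f (Set.Iic (0 : ℝ)) 0
  leftCont : ∀ x ∈ Set.Ioo (0 : ℝ) (1/2), ContinuousWithinAt f (Set.Iic x) x
  rightContHalf : ContinuousWithinAt f (Set.Iic (1/2 : ℝ)) (1/2)

/-- `g` is the symmetric non-increasing rearrangement of `f`: it is symmetric non-increasing
and has the same distribution as `f` under the Lebesgue measure of the circle. -/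
def IsRearrangement (f g : ℝ → ℝ) : Prop :=
  SymNonInc g ∧ ∀ a : ℝ, μc {x | g x ≤ a} = μc {x | f x ≤ a}

lemma circ_meas : MeasurableSet circ := measurableSet_Ioc

lemma μc_apply (s : Set ℝ) : μc s = volume (s ∩ circ) :=
  Measure.restrict_apply' circ_meas

instance : IsFiniteMeasure μc := by
  constructor
  rw [μc_apply, Set.univ_inter, circ, Real.volume_Ioc]
  exact ENNReal.ofReal_lt_top

/-- Structural lemma: superlevel sets of a symmetric nonincreasing function are a.e.
intervals around 0. -/
lemma SymNonInc.exists_r {h : ℝ → ℝ} (hh : SymNonInc h) (a : ℝ) :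
    ∃ r : ℝ, 0 ≤ r ∧ r ≤ 1/2 ∧ (({x | a < h x} : Set ℝ) ∩ circ : Set ℝ) =ᵐ[volume] (Set.Ioo (-r) r : Set ℝ) := by
  classical
  set T : Set ℝ := {x | x ∈ Set.Ico (0:ℝ) (1/2) ∧ h x ≤ a} with hTdef
  set r : ℝ := if hTne : T.Nonempty then sInf T else 1/2 with hrdef
  have hbdd : BddBelow T := ⟨0, fun x hx => hx.1.1⟩
  have hr0 : 0 ≤ r := by
    rw [hrdef]; split_ifs with hTne
    · exact le_csInf hTne fun x hx => hx.1.1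
    · norm_num
  have hrh : r ≤ 1/2 := by
    rw [hrdef]; split_ifs with hTne
    · obtain ⟨x, hx⟩ := hTne; exact le_trans (csInf_le hbdd hx) hx.1.2.le
    · exact le_refl _
  have hi : ∀ x : ℝ, 0 ≤ x → x < r → a < h x := by
    intro x hx0 hxr
    by_contra hcon; push_neg at hcon
    have hxT : x ∈ T := ⟨⟨hx0, lt_of_lt_of_le hxr hrh⟩, hcon⟩
    have hle : r ≤ x := by
      rw [hrdef]; split_ifs with hTne
      · exact csInf_le hbdd hxT
      · exact absurd ⟨x, hxT⟩ hTne
    linarith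
  have hii : ∀ x : ℝ, r < x → x < 1/2 → h x ≤ a := by
    intro x hrx hxh
    have hTne : T.Nonempty := by
      by_contra hc
      rw [hrdef, dif_neg hc] at hrx; linarith
    rw [hrdef, dif_pos hTne] at hrx
    obtain ⟨y, hyT, hyx⟩ := exists_lt_of_csInf_lt hTne hrx
    exact le_trans (hh.anti hyT.1 ⟨le_trans hyT.1.1 hyx.le, hxh⟩ hyx.le) hyT.2
  have hsymm : ∀ x : ℝ, -(1/2) < x → x < 0 → h x = h (-x) := by
    intro x h1 h2
    have := hh.symm (-x) ⟨by linarith, by linarith⟩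
    rwa [neg_neg] at this
  refine ⟨r, hr0, hrh, ?_⟩
  rw [MeasureTheory.ae_eq_set]
  constructor
  · refine measure_mono_null (t := ({-r, r, 1/2} : Set ℝ)) ?_
      (Set.Finite.measure_zero (by simp) volume)
    rintro x ⟨⟨hax, hxc⟩, hnI⟩
    obtain ⟨hxl, hxu⟩ := hxc
    simp only [Set.mem_setOf_eq] at hax
    rcases eq_or_lt_of_le hxu with hhalf | hxh
    · simp [hhalf]
    rcases le_or_gt 0 x with hx0 | hx0
    · have hxr : x ≤ r := by
        by_contra hc; push_neg at hc
        exact absurd (hii x hc hxh) (not_le.2 hax)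
      have hge : r ≤ x := by
        by_contra hc; push_neg at hc
        have hrpos : 0 < r := lt_of_le_of_lt hx0 hc
        exact hnI ⟨by linarith, hc⟩
      simp [le_antisymm hxr hge]
    · have hax' : a < h (-x) := by rw [← hsymm x hxl hx0]; exact hax
      have hxr : -x ≤ r := by
        by_contra hc; push_neg at hc
        exact absurd (hii (-x) hc (by linarith)) (not_le.2 hax')
      have hge : r ≤ -x := by
        by_contra hc; push_neg at hc
        have hrpos : 0 < r := by linarith
        exact hnI ⟨by linarith, by linarith⟩
      have : x = -r := by linarith [le_antisymm hxr hge]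
      simp [this]
  · refine measure_mono_null (t := (∅ : Set ℝ)) ?_ measure_empty
    rintro x ⟨⟨hxl, hxu⟩, hn⟩
    exfalso
    have hxc : x ∈ circ := ⟨by linarith, by linarith⟩
    have hax : ¬ a < h x := fun hc => hn ⟨hc, hxc⟩
    rcases le_or_gt 0 x with hx0 | hx0
    · exact hax (hi x hx0 hxu)
    · have := hsymm x (by linarith) hx0
      exact hax (by rw [this]; exact hi (-x) (by linarith) (by linarith))

lemma SymNonInc.exists_r' {h : ℝ → ℝ} (hh : SymNonInc h) (a : ℝ) :
    ∃ r : ℝ, 0 ≤ r ∧ r ≤ 1/2 ∧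
      (({x | a < h x} : Set ℝ) ∩ circ : Set ℝ) =ᵐ[volume] (Set.Ioo (-r) r : Set ℝ) ∧
      μc {x | a < h x} = ENNReal.ofReal (2 * r) := by
  obtain ⟨r, hr0, hrh, hae⟩ := hh.exists_r a
  refine ⟨r, hr0, hrh, hae, ?_⟩
  rw [μc_apply, measure_congr hae, Real.volume_Ioo]
  congr 1; ring

lemma SymNonInc.nullMeasurableSet {h : ℝ → ℝ} (hh : SymNonInc h) (a : ℝ) :
    NullMeasurableSet {x | a < h x} μc := by
  obtain ⟨r, hr0, hrh, hae, _⟩ := hh.exists_r' a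
  have : ({x | a < h x} : Set ℝ) =ᵐ[μc] (Set.Ioo (-r) r : Set ℝ) := by
    rw [MeasureTheory.ae_eq_set] at hae ⊢
    constructor
    · rw [μc_apply]
      refine measure_mono_null ?_ hae.1
      rintro x ⟨⟨hx1, hx2⟩, hx3⟩
      exact ⟨⟨hx1, hx3⟩, hx2⟩
    · rw [μc_apply]
      refine measure_mono_null ?_ hae.2
      rintro x ⟨⟨hx1, hx2⟩, _⟩
      exact ⟨hx1, fun hc => hx2 hc.1⟩
  exact (measurableSet_Ioo.nullMeasurableSet).congr this.symm

lemma SymNonInc.aemeasurable {h : ℝ → ℝ} (hh : SymNonInc h) : AEMeasurable h μc := by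
  have : NullMeasurable h μc := by
    refine @measurable_of_Ioi ℝ (NullMeasurableSpace ℝ μc) _ _ _ _ _ _ _ h ?_
    intro x
    exact hh.nullMeasurableSet x
  exact this.aemeasurable

/-- Transfer of the distribution from sublevel to superlevel sets. -/
lemma transfer {f fs : ℝ → ℝ} (hfm : Measurable f) (hfs : IsRearrangement f fs) (a : ℝ) :
    μc {x | a < fs x} = μc {x | a < f x} := by
  have h1 : ({x | a < fs x} : Set ℝ) = ({x | fs x ≤ a} : Set ℝ)ᶜ := by
    ext x; simp [not_le]
  have h2 : ({x | a < f x} : Set ℝ) = ({x | f x ≤ a} : Set ℝ)ᶜ := by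
    ext x; simp [not_le]
  have hns : NullMeasurableSet {x | fs x ≤ a} μc := by
    have h := (hfs.1.nullMeasurableSet a).compl
    have e : ({x | a < fs x} : Set ℝ)ᶜ = {x | fs x ≤ a} := by ext x; simp [not_lt]
    rwa [e] at h
  have hms : MeasurableSet ({x | f x ≤ a} : Set ℝ) := hfm measurableSet_Iic
  have c1 : ({x | a < fs x} : Set ℝ) = ({x | fs x ≤ a} : Set ℝ)ᶜ := by ext x; simp [not_le]
  have c2 : ({x | a < f x} : Set ℝ) = ({x | f x ≤ a} : Set ℝ)ᶜ := by ext x; simp [not_le]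
  rw [c1, c2, measure_compl₀ hns (measure_ne_top _ _),
    measure_compl₀ hms.nullMeasurableSet (measure_ne_top _ _), hfs.2 a]

/-- Nested interval lemma. -/
lemma nested {h₁ h₂ : ℝ → ℝ} (hh₁ : SymNonInc h₁) (hh₂ : SymNonInc h₂) (a b : ℝ) :
    μc ({x | a < h₁ x} ∩ {x | h₂ x ≤ b}) = μc {x | a < h₁ x} - μc {x | b < h₂ x} := by
  obtain ⟨r₁, hr₁0, hr₁h, hae₁, hm₁⟩ := hh₁.exists_r' a
  obtain ⟨r₂, hr₂0, hr₂h, hae₂, hm₂⟩ := hh₂.exists_r' b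
  have hset : (({x | a < h₁ x} ∩ {x | h₂ x ≤ b}) : Set ℝ) ∩ circ =
      (({x | a < h₁ x} : Set ℝ) ∩ circ) \ (({x | b < h₂ x} : Set ℝ) ∩ circ) := by
    ext x
    constructor
    · rintro ⟨⟨hx1, hx2⟩, hx3⟩
      exact ⟨⟨hx1, hx3⟩, fun hc => absurd hx2 (not_le.2 (show b < h₂ x from hc.1))⟩
    · rintro ⟨⟨hx1, hx3⟩, hx2⟩
      refine ⟨⟨hx1, ?_⟩, hx3⟩
      by_contra hc
      exact hx2 ⟨show b < h₂ x from not_le.1 hc, hx3⟩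
  have haediff : ((({x | a < h₁ x} : Set ℝ) ∩ circ) \ (({x | b < h₂ x} : Set ℝ) ∩ circ) : Set ℝ)
      =ᵐ[volume] (Set.Ioo (-r₁) r₁ \ Set.Ioo (-r₂) r₂ : Set ℝ) := by
    filter_upwards [hae₁, hae₂] with x e₁ e₂
    simp only [eq_iff_iff] at e₁ e₂ ⊢
    exact ⟨fun hx => ⟨e₁.1 hx.1, fun hc => hx.2 (e₂.2 hc)⟩,
      fun hx => ⟨e₁.2 hx.1, fun hc => hx.2 (e₂.1 hc)⟩⟩
  rw [μc_apply, hset, measure_congr haediff, hm₁, hm₂]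
  rcases le_total r₁ r₂ with hle | hle
  · rw [Set.diff_eq_empty.2 (Set.Ioo_subset_Ioo (by linarith) hle), measure_empty]
    exact (tsub_eq_zero_of_le (ENNReal.ofReal_le_ofReal (by linarith))).symm
  · rw [measure_diff (Set.Ioo_subset_Ioo (by linarith) hle)
      measurableSet_Ioo.nullMeasurableSet (by simp), Real.volume_Ioo, Real.volume_Ioo]
    congr 1 <;> · congr 1; ring

/-- Subadditivity bound for arbitrary measurable pair. -/
lemma meas_pair_lb {u v : ℝ → ℝ} (a b : ℝ) :
    μc {x | a < u x} - μc {x | b < v x} ≤ μc ({x | a < u x} ∩ {x | v x ≤ b}) := by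
  rw [tsub_le_iff_right]
  refine le_trans (measure_mono ?_) (measure_union_le _ _)
  intro x hx
  rcases le_or_gt (v x) b with hv | hv
  · exact Or.inl ⟨hx, hv⟩
  · exact Or.inr hv

lemma stepA1 {u v : ℝ → ℝ} (hu : Measurable u) (hv : Measurable v) (t : ℝ) :
    ∫⁻ x, ENNReal.ofReal (u x - v x - t) ∂μc
      = ∫⁻ s, μc {x | s + t < u x ∧ v x ≤ s} ∂volume := by
  set K : Set (ℝ × ℝ) := {p | p.2 + t < u p.1 ∧ v p.1 ≤ p.2} with hK
  have hKm : MeasurableSet K := by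
    refine MeasurableSet.inter ?_ ?_
    · exact measurableSet_lt (measurable_snd.add_const t) (hu.comp measurable_fst)
    · exact measurableSet_le (hv.comp measurable_fst) measurable_snd
  have h1 : ∀ x : ℝ, ENNReal.ofReal (u x - v x - t) = volume (Prod.mk x ⁻¹' K) := by
    intro x
    have : Prod.mk x ⁻¹' K = Set.Ico (v x) (u x - t) := by
      ext s
      simp only [hK, Set.mem_preimage, Set.mem_setOf_eq, Set.mem_Ico]
      constructor
      · rintro ⟨h1, h2⟩; exact ⟨h2, by linarith⟩
      · rintro ⟨h1, h2⟩; exact ⟨by linarith, h1⟩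
    rw [this, Real.volume_Ico]
    congr 1; ring
  calc ∫⁻ x, ENNReal.ofReal (u x - v x - t) ∂μc
      = ∫⁻ x, volume (Prod.mk x ⁻¹' K) ∂μc := by
        exact lintegral_congr h1
    _ = (μc.prod volume) K := (Measure.prod_apply hKm).symm
    _ = ∫⁻ s, μc ((fun x => (x, s)) ⁻¹' K) ∂volume := Measure.prod_apply_symm hKm
    _ = ∫⁻ s, μc {x | s + t < u x ∧ v x ≤ s} ∂volume := rfl

lemma stepA {u v : ℝ → ℝ} (hu : Measurable u) (hv : Measurable v) {t : ℝ} (ht : 0 ≤ t) :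
    ∫⁻ x, ENNReal.ofReal (|u x - v x| - t) ∂μc
      = ∫⁻ s, (μc {x | s + t < u x ∧ v x ≤ s} + μc {x | s + t < v x ∧ u x ≤ s}) ∂volume := by
  have h1 : ∀ x : ℝ, ENNReal.ofReal (|u x - v x| - t)
      = ENNReal.ofReal (u x - v x - t) + ENNReal.ofReal (v x - u x - t) := by
    intro x
    rcases le_total (v x) (u x) with hle | hle
    · have h2 : ENNReal.ofReal (v x - u x - t) = 0 := ENNReal.ofReal_of_nonpos (by linarith)
      rw [abs_of_nonneg (by linarith), h2, add_zero]
    · have h2 : ENNReal.ofReal (u x - v x - t) = 0 := ENNReal.ofReal_of_nonpos (by linarith)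
      rw [abs_of_nonpos (by linarith), h2, zero_add, neg_sub]
  have hm1 : Measurable fun s : ℝ => μc {x | s + t < u x ∧ v x ≤ s} := by
    have hKm : MeasurableSet {p : ℝ × ℝ | p.2 + t < u p.1 ∧ v p.1 ≤ p.2} :=
      (measurableSet_lt (measurable_snd.add_const t) (hu.comp measurable_fst)).inter
        (measurableSet_le (hv.comp measurable_fst) measurable_snd)
    exact measurable_measure_prodMk_right hKm
  rw [lintegral_congr h1, lintegral_add_left (f := fun x => ENNReal.ofReal (u x - v x - t)) (((hu.sub hv).sub_const t).ennreal_ofReal),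
    stepA1 hu hv t, stepA1 hv hu t, ← lintegral_add_left hm1]

lemma pointwiseB {q : ℝ} (hq : 1 < q) {c : ℝ} (hc : 0 ≤ c) :
    ENNReal.ofReal (c ^ q)
      = ENNReal.ofReal (q * (q - 1)) *
        ∫⁻ t in Set.Ioi (0:ℝ), ENNReal.ofReal (t ^ (q - 2)) * ENNReal.ofReal (c - t) := by
  have hq0 : (0:ℝ) < q := by linarith
  have hq1 : (0:ℝ) < q - 1 := by linarith
  rcases eq_or_lt_of_le hc with hc0 | hcpos
  · rw [← hc0]
    rw [Real.zero_rpow (by positivity), ENNReal.ofReal_zero]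
    have : ∀ t ∈ Set.Ioi (0:ℝ),
        ENNReal.ofReal (t ^ (q - 2)) * ENNReal.ofReal ((0:ℝ) - t) = 0 := by
      intro t ht
      simp only [Set.mem_Ioi] at ht
      rw [show ENNReal.ofReal ((0:ℝ) - t) = 0 from ENNReal.ofReal_of_nonpos (by linarith),
        mul_zero]
    rw [setLIntegral_congr_fun measurableSet_Ioi this,
      lintegral_zero, mul_zero]
  · -- c > 0
    have hsplit : Set.Ioi (0:ℝ) = Set.Ioc (0:ℝ) c ∪ Set.Ioi c :=
      (Set.Ioc_union_Ioi_eq_Ioi hcpos.le).symm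
    have hzero : ∫⁻ t in Set.Ioi c, ENNReal.ofReal (t ^ (q - 2)) * ENNReal.ofReal (c - t) = 0 := by
      have : ∀ t ∈ Set.Ioi c,
          ENNReal.ofReal (t ^ (q - 2)) * ENNReal.ofReal (c - t) = 0 := by
        intro t ht
        simp only [Set.mem_Ioi] at ht
        rw [show ENNReal.ofReal (c - t) = 0 from ENNReal.ofReal_of_nonpos (by linarith),
          mul_zero]
      rw [setLIntegral_congr_fun measurableSet_Ioi this,
        lintegral_zero]
    rw [hsplit, lintegral_union measurableSet_Ioi (Set.Ioc_disjoint_Ioi le_rfl), hzero, add_zero]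
    have hcongr : ∀ t ∈ Set.Ioc (0:ℝ) c,
        ENNReal.ofReal (t ^ (q - 2)) * ENNReal.ofReal (c - t)
          = ENNReal.ofReal (t ^ (q - 2) * (c - t)) := by
      intro t ht
      rw [ENNReal.ofReal_mul (Real.rpow_nonneg ht.1.le _)]
    rw [setLIntegral_congr_fun measurableSet_Ioc hcongr]
    -- convert to a Bochner integral
    have hInt : IntervalIntegrable (fun t : ℝ => t ^ (q - 2) * (c - t)) volume 0 c := by
      have e : ∀ t ∈ Set.uIcc (0:ℝ) c, t ^ (q - 2) * (c - t) = c * t ^ (q - 2) - t ^ (q - 1) := by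
        intro t ht
        rcases eq_or_ne t 0 with rfl | ht0
        · rw [show (0:ℝ) ^ (q - 1) = 0 from Real.zero_rpow (ne_of_gt hq1)]
          ring
        · have : t ^ (q - 1) = t ^ (q - 2) * t := by
            have h2 : q - 1 = (q - 2) + 1 := by ring
            rw [h2, Real.rpow_add_one ht0]
          rw [this]; ring
      have base : IntervalIntegrable (fun t : ℝ => c * t ^ (q - 2) - t ^ (q - 1)) volume 0 c :=
        ((intervalIntegral.intervalIntegrable_rpow' (by linarith)).const_mul c).sub
          (intervalIntegral.intervalIntegrable_rpow' (by linarith))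
      refine base.congr_ae ?_
      refine (ae_restrict_iff' measurableSet_uIoc).2 (Filter.Eventually.of_forall ?_)
      intro t ht
      exact (e t (Set.uIoc_subset_uIcc ht)).symm
    have hIOn : IntegrableOn (fun t : ℝ => t ^ (q - 2) * (c - t)) (Set.Ioc 0 c) volume :=
      (intervalIntegrable_iff_integrableOn_Ioc_of_le hcpos.le).1 hInt
    have hnn : 0 ≤ᵐ[volume.restrict (Set.Ioc 0 c)] fun t : ℝ => t ^ (q - 2) * (c - t) := by
      refine (ae_restrict_iff' measurableSet_Ioc).2 (Filter.Eventually.of_forall ?_)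
      intro t ht
      exact mul_nonneg (Real.rpow_nonneg ht.1.le _) (by linarith [ht.2])
    rw [← MeasureTheory.ofReal_integral_eq_lintegral_ofReal hIOn hnn]
    have e : ∀ t ∈ Set.uIcc (0:ℝ) c, t ^ (q - 2) * (c - t) = c * t ^ (q - 2) - t ^ (q - 1) := by
      intro t ht
      rcases eq_or_ne t 0 with rfl | ht0
      · rw [show (0:ℝ) ^ (q - 1) = 0 from Real.zero_rpow (ne_of_gt hq1)]
        ring
      · have h3 : t ^ (q - 1) = t ^ (q - 2) * t := by
          have h2 : q - 1 = (q - 2) + 1 := by ring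
          rw [h2, Real.rpow_add_one ht0]
        rw [h3]; ring
    have hval : (∫ t in Set.Ioc (0:ℝ) c, t ^ (q - 2) * (c - t)) = c ^ q / (q * (q - 1)) := by
      rw [← intervalIntegral.integral_of_le hcpos.le, intervalIntegral.integral_congr e,
        intervalIntegral.integral_sub ((intervalIntegral.intervalIntegrable_rpow' (by linarith)).const_mul c)
          (intervalIntegral.intervalIntegrable_rpow' (by linarith)),
        intervalIntegral.integral_const_mul, integral_rpow (Or.inl (by linarith)),
        integral_rpow (Or.inl (by linarith)),
        show q - 2 + 1 = q - 1 by ring, show q - 1 + 1 = q by ring,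
        show (0:ℝ) ^ (q - 1) = 0 from Real.zero_rpow (ne_of_gt hq1),
        show (0:ℝ) ^ q = 0 from Real.zero_rpow (ne_of_gt hq0), sub_zero, sub_zero]
      have hcc : c * c ^ (q - 1) = c ^ q := by
        rw [← Real.rpow_one_add' hcpos.le (by intro h; linarith), show 1 + (q - 1) = q by ring]
      rw [← mul_div_assoc, hcc]
      field_simp
      ring
    rw [hval, ← ENNReal.ofReal_mul (by positivity), mul_comm,
      div_mul_cancel₀ _ (by positivity : q * (q - 1) ≠ 0)]

lemma stepB {F : ℝ → ℝ} (hF : Measurable F) {q : ℝ} (hq : 1 < q) :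
    ∫⁻ x, ENNReal.ofReal (|F x| ^ q) ∂μc
      = ENNReal.ofReal (q * (q - 1)) *
        ∫⁻ t in Set.Ioi (0:ℝ), ENNReal.ofReal (t ^ (q - 2)) *
          ∫⁻ x, ENNReal.ofReal (|F x| - t) ∂μc ∂volume := by
  have h1 : ∀ x : ℝ, ENNReal.ofReal (|F x| ^ q)
      = ENNReal.ofReal (q * (q - 1)) *
        ∫⁻ t in Set.Ioi (0:ℝ), ENNReal.ofReal (t ^ (q - 2)) * ENNReal.ofReal (|F x| - t) :=
    fun x => pointwiseB hq (abs_nonneg _)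
  rw [lintegral_congr h1, lintegral_const_mul' _ _ ENNReal.ofReal_ne_top]
  congr 1
  have hmeas : Measurable (Function.uncurry fun x t : ℝ =>
      ENNReal.ofReal (t ^ (q - 2)) * ENNReal.ofReal (|F x| - t)) := by
    refine Measurable.mul (f := fun p : ℝ × ℝ => ENNReal.ofReal (p.2 ^ (q - 2))) (g := fun p : ℝ × ℝ => ENNReal.ofReal (|F p.1| - p.2)) ?_ ?_
    · have : Measurable fun p : ℝ × ℝ => p.2 ^ (q - 2) := by fun_prop
      exact this.ennreal_ofReal
    · exact (((hF.comp measurable_fst).abs.sub measurable_snd)).ennreal_ofReal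
  rw [lintegral_lintegral_swap hmeas.aemeasurable]
  refine lintegral_congr fun t => ?_
  rw [lintegral_const_mul' _ _ ENNReal.ofReal_ne_top]

lemma slice_le {u v us vs U V : ℝ → ℝ} (hum : Measurable u) (hvm : Measurable v)
    (hus : IsRearrangement u us) (hvs : IsRearrangement v vs)
    (hUe : us =ᵐ[μc] U) (hVe : vs =ᵐ[μc] V) (a b : ℝ) :
    μc {x | a < U x ∧ V x ≤ b} ≤ μc {x | a < u x ∧ v x ≤ b} := by
  have e1 : ({x | a < U x ∧ V x ≤ b} : Set ℝ) =ᵐ[μc] ({x | a < us x ∧ vs x ≤ b} : Set ℝ) := by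
    filter_upwards [hUe, hVe] with x e f
    change (a < U x ∧ V x ≤ b) = (a < us x ∧ vs x ≤ b)
    rw [← e, ← f]
  rw [measure_congr e1,
    show ({x | a < us x ∧ vs x ≤ b} : Set ℝ) = {x | a < us x} ∩ {x | vs x ≤ b} from rfl,
    nested hus.1 hvs.1 a b, transfer hum hus a, transfer hvm hvs b,
    show ({x | a < u x ∧ v x ≤ b} : Set ℝ) = {x | a < u x} ∩ {x | v x ≤ b} from rfl]
  exact meas_pair_lb a b

lemma phi_le {f g fs gs F G : ℝ → ℝ} (hfm : Measurable f) (hgm : Measurable g)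
    (hfs : IsRearrangement f fs) (hgs : IsRearrangement g gs)
    (hFm : Measurable F) (hGm : Measurable G)
    (hFe : fs =ᵐ[μc] F) (hGe : gs =ᵐ[μc] G) {t : ℝ} (ht : 0 ≤ t) :
    ∫⁻ x, ENNReal.ofReal (|F x - G x| - t) ∂μc
      ≤ ∫⁻ x, ENNReal.ofReal (|f x - g x| - t) ∂μc := by
  rw [stepA hFm hGm ht, stepA hfm hgm ht]
  refine lintegral_mono fun s => ?_
  exact add_le_add (slice_le hfm hgm hfs hgs hFe hGe (s + t) s)
    (slice_le hgm hfm hgs hfs hGe hFe (s + t) s)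

lemma stepB2 {u v : ℝ → ℝ} (hu : Measurable u) (hv : Measurable v) {q : ℝ} (hq : 1 < q) :
    ∫⁻ x, ENNReal.ofReal (|u x - v x| ^ q) ∂μc
      = ENNReal.ofReal (q * (q - 1)) *
        ∫⁻ t in Set.Ioi (0:ℝ), ENNReal.ofReal (t ^ (q - 2)) *
          ∫⁻ x, ENNReal.ofReal (|u x - v x| - t) ∂μc ∂volume :=
  stepB (hu.sub hv) hq

/-- **Non-expansion property of the rearrangement**: `‖f* - g*‖_p ≤ ‖f - g‖_p`. -/
theorem statement2 (p : ℝ≥0∞) (hp : 1 ≤ p) (f g fs gs : ℝ → ℝ)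
    (hfm : Measurable f) (hgm : Measurable g)
    (hf : eLpNorm f p μc < ⊤) (hg : eLpNorm g p μc < ⊤)
    (hfs : IsRearrangement f fs) (hgs : IsRearrangement g gs) :
    eLpNorm (fs - gs) p μc ≤ eLpNorm (f - g) p μc := by
  by_cases hptop : p = ∞
  · subst hptop
    set C := eLpNorm (f - g) ⊤ μc with hC
    rcases eq_or_ne C ⊤ with hCtop | hCtop
    · rw [hCtop]; exact le_top
    set c := C.toReal with hc
    have hae : ∀ᵐ x ∂μc, |f x - g x| ≤ c := by
      have h1 : ∀ᵐ x ∂μc, (‖(f - g) x‖₊ : ℝ≥0∞) ≤ C := by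
        rw [hC, eLpNorm_exponent_top]; exact ae_le_eLpNormEssSup
      filter_upwards [h1] with x hx
      rw [Pi.sub_apply] at hx; change ‖f x - g x‖ₑ ≤ C at hx; rw [Real.enorm_eq_ofReal_abs] at hx
      exact (ENNReal.ofReal_le_iff_le_toReal hCtop).1 hx
    have key : ∀ (u v us vs : ℝ → ℝ), Measurable u → Measurable v →
        IsRearrangement u us → IsRearrangement v vs →
        (∀ᵐ x ∂μc, u x - v x ≤ c) → μc {x | c < us x - vs x} = 0 := by
      intro u v us vs hum hvm hus hvs hle
      have hsub2 : {x | c < us x - vs x} ⊆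
          ⋃ r : ℚ, ({x | (r:ℝ) + c < us x} ∩ {x | vs x ≤ (r:ℝ)}) := by
        intro x hx
        simp only [Set.mem_setOf_eq] at hx
        obtain ⟨r, hr1, hr2⟩ := exists_rat_btwn (show vs x < us x - c by linarith)
        exact Set.mem_iUnion.2 ⟨r, ⟨show (r:ℝ) + c < us x by linarith, le_of_lt hr1⟩⟩
      refine measure_mono_null hsub2 (measure_iUnion_null fun r => ?_)
      rw [show ({x | (r:ℝ) + c < us x} ∩ {x | vs x ≤ (r:ℝ)} : Set ℝ) =
        ({x | (r:ℝ) + c < us x} ∩ {x | vs x ≤ (r:ℝ)}) from rfl,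
        nested hus.1 hvs.1, transfer hum hus, transfer hvm hvs]
      refine tsub_eq_zero_of_le ?_
      have hN : μc {x | ¬ (u x - v x ≤ c)} = 0 := ae_iff.1 hle
      calc μc {x | (r:ℝ) + c < u x}
          ≤ μc ({x | (r:ℝ) < v x} ∪ {x | ¬ (u x - v x ≤ c)}) := by
            refine measure_mono fun x hx => ?_
            simp only [Set.mem_setOf_eq] at hx
            by_cases h : (r:ℝ) < v x
            · exact Or.inl h
            · exact Or.inr (fun hcon => by push_neg at h; have hcon' : u x - v x ≤ c := hcon; linarith)
        _ ≤ μc {x | (r:ℝ) < v x} + μc {x | ¬ (u x - v x ≤ c)} := measure_union_le _ _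
        _ = μc {x | (r:ℝ) < v x} := by rw [hN, add_zero]
    have h1 := key f g fs gs hfm hgm hfs hgs (hae.mono fun x hx => (abs_le.1 hx).2)
    have h2 := key g f gs fs hgm hfm hgs hfs (hae.mono fun x hx => by
      have := (abs_le.1 hx).1; linarith)
    rw [eLpNorm_exponent_top]
    refine le_trans (eLpNormEssSup_le_of_ae_bound (C := c) ?_) ?_
    · refine ae_iff.2 (measure_mono_null ?_ (measure_union_null h1 h2))
      intro x hx
      simp only [Set.mem_setOf_eq, Pi.sub_apply, Real.norm_eq_abs] at hx
      rcases lt_or_ge c (fs x - gs x) with h | h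
      · exact Or.inl h
      · refine Or.inr (show c < gs x - fs x from ?_)
        by_contra hcon
        push_neg at hcon
        exact hx (abs_le.2 ⟨by linarith, h⟩)
    · exact le_of_eq (ENNReal.ofReal_toReal hCtop)
  · have hfsa : AEMeasurable fs μc := hfs.1.aemeasurable
    have hgsa : AEMeasurable gs μc := hgs.1.aemeasurable
    set F := hfsa.mk fs with hFdef
    set G := hgsa.mk gs with hGdef
    have hFm : Measurable F := hfsa.measurable_mk
    have hGm : Measurable G := hgsa.measurable_mk
    have hFe : fs =ᵐ[μc] F := hfsa.ae_eq_mk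
    have hGe : gs =ᵐ[μc] G := hgsa.ae_eq_mk
    have hsubeq : (fs - gs) =ᵐ[μc] (F - G) := by
      filter_upwards [hFe, hGe] with x e1 e2
      simp [e1, e2]
    rw [eLpNorm_congr_ae hsubeq]
    have hp0 : p ≠ 0 := by
      intro h; rw [h] at hp; simp at hp
    set q := p.toReal with hqdef
    have hq1 : 1 ≤ q := by
      rw [hqdef, ← ENNReal.toReal_one]
      exact ENNReal.toReal_mono hptop hp
    rw [eLpNorm_eq_lintegral_rpow_enorm_toReal hp0 hptop, eLpNorm_eq_lintegral_rpow_enorm_toReal hp0 hptop]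
    refine ENNReal.rpow_le_rpow ?_ (by positivity)
    have hconv : ∀ u v : ℝ → ℝ, (∫⁻ x, ‖(u - v) x‖ₑ ^ q ∂μc)
        = ∫⁻ x, ENNReal.ofReal (|u x - v x| ^ q) ∂μc := by
      intro u v
      refine lintegral_congr fun x => ?_
      rw [Pi.sub_apply, Real.enorm_eq_ofReal_abs,
        ENNReal.ofReal_rpow_of_nonneg (abs_nonneg _) (by linarith)]
    rw [hconv, hconv]
    rcases eq_or_lt_of_le hq1 with hq1' | hq1'
    · have congr1 : ∀ u v : ℝ → ℝ, (∫⁻ x, ENNReal.ofReal (|u x - v x| ^ q) ∂μc)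
          = ∫⁻ x, ENNReal.ofReal (|u x - v x| - 0) ∂μc := by
        intro u v
        refine lintegral_congr fun x => ?_
        rw [← hq1', Real.rpow_one, sub_zero]
      rw [congr1, congr1]
      exact phi_le hfm hgm hfs hgs hFm hGm hFe hGe le_rfl
    · rw [stepB2 hFm hGm hq1', stepB2 hfm hgm hq1']
      refine mul_le_mul_right ?_ _
      refine lintegral_mono_ae ?_
      filter_upwards [ae_restrict_mem measurableSet_Ioi] with t ht
      exact mul_le_mul_right (phi_le hfm hgm hfs hgs hFm hGm hFe hGe (le_of_lt ht)) _
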